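/- Fix u ∈ (0,∞)^{N×K}, a finite set E of hyperedges with weights A_e ∈ ℕ, a constant C > 0, and for each e ∈ E strictly positive reals ρ^{(e)}_{ijkq} (indexed by i<j ∈ e and k,q ∈ {1,…,K}) summing to 1. For a K×K matrix w with strictly positive entries (its entries treated as independent variables), the partial derivative of 𝓛(u,w,ρ) with respect to w_{kq} equals −C Σ_{i<j ∈ V} u_{ik} u_{jq} + (1/w_{kq}) Σ_{e∈E} A_e ρ^{(e)}_{kq}, where ρ^{(e)}_{kq} := Σ_{i<j∈e} ρ^{(e)}_{ijkq}. Consequently, this partial derivative vanishes if and only if w_{kq} = ( Σ_{e∈E} A_e ρ^{(e)}_{kq} ) / ( C Σ_{i<j ∈ V} u_{ik} u_{jq} ), which is the EM update for w (assuming the denominator is nonzero). -/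

import Mathlib

/-- The bilinear interaction `u_i^T w u_j = Σ_{k,q} u_{ik} w_{kq} u_{jq}`. -/
noncomputable def bilin {N K : ℕ} (u : Fin N → Fin K → ℝ) (w : Fin K → Fin K → ℝ)
    (i j : Fin N) : ℝ :=
  ∑ k, ∑ q, u i k * w k q * u j q

/-- The variational objective
`𝓛(u,w,ρ) = −C Σ_{i<j∈V} u_i^T w u_j
  + Σ_{e∈E} A_e Σ_{i<j∈e} Σ_{k,q} ρ^{(e)}_{ijkq} log(u_{ik} u_{jq} w_{kq}/ρ^{(e)}_{ijkq})`. -/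
noncomputable def Lfun {N K : ℕ} (C : ℝ) (E : Finset (Finset (Fin N)))
    (A : Finset (Fin N) → ℕ)
    (ρ : Finset (Fin N) → Fin N → Fin N → Fin K → Fin K → ℝ)
    (u : Fin N → Fin K → ℝ) (w : Fin K → Fin K → ℝ) : ℝ :=
  -C * (∑ i : Fin N, ∑ j : Fin N, if i < j then bilin u w i j else 0)
    + ∑ e ∈ E, (A e : ℝ) *
        ∑ i ∈ e, ∑ j ∈ e, if i < j then
          ∑ k, ∑ q, ρ e i j k q * Real.log (u i k * u j q * w k q / ρ e i j k q)
        else 0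

/-- `ρ^{(e)}_{kq} = Σ_{i<j∈e} ρ^{(e)}_{ijkq}`. -/
noncomputable def rhoKQ {N K : ℕ}
    (ρ : Finset (Fin N) → Fin N → Fin N → Fin K → Fin K → ℝ)
    (e : Finset (Fin N)) (k q : Fin K) : ℝ :=
  ∑ i ∈ e, ∑ j ∈ e, if i < j then ρ e i j k q else 0

/-- The partial derivative of `𝓛` with respect to `w_{kq}` (entries treated as
independent variables) equals `−C Σ_{i<j∈V} u_{ik} u_{jq} + (1/w_{kq}) Σ_e A_e ρ^{(e)}_{kq}`;
consequently it vanishes iff `w_{kq}` equals the EM update (when the denominator is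
nonzero). -/
theorem stmt_13 {N K : ℕ} (C : ℝ) (hC : 0 < C)
    (E : Finset (Finset (Fin N))) (hE : ∀ e ∈ E, 2 ≤ e.card)
    (A : Finset (Fin N) → ℕ)
    (u : Fin N → Fin K → ℝ) (hu : ∀ i k, 0 < u i k)
    (ρ : Finset (Fin N) → Fin N → Fin N → Fin K → Fin K → ℝ)
    (hρpos : ∀ e ∈ E, ∀ i ∈ e, ∀ j ∈ e, i < j → ∀ k q, 0 < ρ e i j k q)
    (hρsum : ∀ e ∈ E,
      (∑ i ∈ e, ∑ j ∈ e, if i < j then ∑ k, ∑ q, ρ e i j k q else 0) = 1)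
    (w : Fin K → Fin K → ℝ) (hw : ∀ k q, 0 < w k q)
    (k q : Fin K) :
    HasDerivAt
      (fun t : ℝ => Lfun C E A ρ u (Function.update w k (Function.update (w k) q t)))
      (-C * (∑ i : Fin N, ∑ j : Fin N, if i < j then u i k * u j q else 0)
        + (1 / w k q) * ∑ e ∈ E, (A e : ℝ) * rhoKQ ρ e k q)
      (w k q) ∧
    (C * (∑ i : Fin N, ∑ j : Fin N, if i < j then u i k * u j q else 0) ≠ 0 →
      ((-C * (∑ i : Fin N, ∑ j : Fin N, if i < j then u i k * u j q else 0)
          + (1 / w k q) * ∑ e ∈ E, (A e : ℝ) * rhoKQ ρ e k q) = 0 ↔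
        w k q = (∑ e ∈ E, (A e : ℝ) * rhoKQ ρ e k q)
          / (C * ∑ i : Fin N, ∑ j : Fin N, if i < j then u i k * u j q else 0))) := by
  classical
  have ht0 : 0 < w k q := hw k q
  have hupd : ∀ (t : ℝ) (k' q' : Fin K),
      Function.update w k (Function.update (w k) q t) k' q'
        = if k' = k ∧ q' = q then t else w k' q' := by
    intro t k' q'
    by_cases hk : k' = k
    · subst hk
      by_cases hq : q' = q
      · subst hq; simp
      · simp [Function.update_apply, hq]
    · simp [Function.update_apply, hk]
  -- derivative of the bilinear part
  have hbil : ∀ (i j : Fin N),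
      HasDerivAt (fun t : ℝ => ∑ k', ∑ q',
          u i k' * (if k' = k ∧ q' = q then t else w k' q') * u j q')
        (u i k * u j q) (w k q) := by
    intro i j
    have key : HasDerivAt (fun t : ℝ => ∑ k', ∑ q',
          u i k' * (if k' = k ∧ q' = q then t else w k' q') * u j q')
        (∑ k', ∑ q', if k' = k ∧ q' = q then u i k * u j q else 0) (w k q) := by
      apply HasDerivAt.fun_sum; intro k' _
      apply HasDerivAt.fun_sum; intro q' _
      by_cases h : k' = k ∧ q' = q
      · obtain ⟨hk, hq⟩ := h; subst hk; subst hq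
        simp only [eq_self_iff_true, and_self, if_true]
        simpa using ((hasDerivAt_id (w k' q')).const_mul (u i k')).mul_const (u j q')
      · simp only [if_neg h]
        exact hasDerivAt_const _ _
    have hval : (∑ k', ∑ q', if k' = k ∧ q' = q then u i k * u j q else 0)
        = u i k * u j q := by
      simp [ite_and, Finset.sum_ite_eq']
    rwa [hval] at key
  -- derivative of each log term
  have hlog : ∀ e ∈ E, ∀ i ∈ e, ∀ j ∈ e, i < j →
      HasDerivAt (fun t : ℝ => ∑ k', ∑ q', ρ e i j k' q' *
          Real.log (u i k' * u j q' * (if k' = k ∧ q' = q then t else w k' q')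
            / ρ e i j k' q'))
        (ρ e i j k q / w k q) (w k q) := by
    intro e he i hi j hj hij
    have key : HasDerivAt (fun t : ℝ => ∑ k', ∑ q', ρ e i j k' q' *
          Real.log (u i k' * u j q' * (if k' = k ∧ q' = q then t else w k' q')
            / ρ e i j k' q'))
        (∑ k', ∑ q', if k' = k ∧ q' = q then ρ e i j k q / w k q else 0) (w k q) := by
      apply HasDerivAt.fun_sum; intro k' _
      apply HasDerivAt.fun_sum; intro q' _
      by_cases h : k' = k ∧ q' = q
      · obtain ⟨hk, hq⟩ := h; subst hk; subst hq
        simp only [eq_self_iff_true, and_self, if_true]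
        have hc : 0 < u i k' * u j q' := mul_pos (hu i k') (hu j q')
        have hr : 0 < ρ e i j k' q' := hρpos e he i hi j hj hij k' q'
        have h1 : HasDerivAt (fun t : ℝ => u i k' * u j q' * t / ρ e i j k' q')
            (u i k' * u j q' / ρ e i j k' q') (w k' q') := by
          simpa using ((hasDerivAt_id (w k' q')).const_mul (u i k' * u j q')).div_const
            (ρ e i j k' q')
        have hne : u i k' * u j q' * w k' q' / ρ e i j k' q' ≠ 0 := by positivity
        have h2 := (h1.log hne).const_mul (ρ e i j k' q')
        have hval : ρ e i j k' q' * ((u i k' * u j q' / ρ e i j k' q')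
            / (u i k' * u j q' * w k' q' / ρ e i j k' q'))
            = ρ e i j k' q' / w k' q' := by
          field_simp
          field_simp [(hu i k').ne', (hu j q').ne']
        rwa [hval] at h2
      · simp only [if_neg h]
        exact hasDerivAt_const _ _
    have hval : (∑ k', ∑ q', if k' = k ∧ q' = q then ρ e i j k q / w k q else 0)
        = ρ e i j k q / w k q := by
      simp [ite_and, Finset.sum_ite_eq']
    rwa [hval] at key
  -- main derivative
  have hmain : HasDerivAt
      (fun t : ℝ => Lfun C E A ρ u (Function.update w k (Function.update (w k) q t)))
      (-C * (∑ i : Fin N, ∑ j : Fin N, if i < j then u i k * u j q else 0)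
        + (1 / w k q) * ∑ e ∈ E, (A e : ℝ) * rhoKQ ρ e k q)
      (w k q) := by
    have hT1 : HasDerivAt (fun t : ℝ => ∑ i : Fin N, ∑ j : Fin N,
        if i < j then ∑ k', ∑ q',
          u i k' * (if k' = k ∧ q' = q then t else w k' q') * u j q' else 0)
        (∑ i : Fin N, ∑ j : Fin N, if i < j then u i k * u j q else 0) (w k q) := by
      apply HasDerivAt.fun_sum; intro i _
      apply HasDerivAt.fun_sum; intro j _
      by_cases hij : i < j
      · simp only [if_pos hij]; exact hbil i j
      · simp only [if_neg hij]; exact hasDerivAt_const _ _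
    have hT2 : HasDerivAt (fun t : ℝ => ∑ e ∈ E, (A e : ℝ) *
        ∑ i ∈ e, ∑ j ∈ e, if i < j then ∑ k', ∑ q', ρ e i j k' q' *
          Real.log (u i k' * u j q' * (if k' = k ∧ q' = q then t else w k' q')
            / ρ e i j k' q') else 0)
        (∑ e ∈ E, (A e : ℝ) * ∑ i ∈ e, ∑ j ∈ e,
          if i < j then ρ e i j k q / w k q else 0) (w k q) := by
      apply HasDerivAt.fun_sum; intro e he
      apply HasDerivAt.const_mul
      apply HasDerivAt.fun_sum; intro i hi
      apply HasDerivAt.fun_sum; intro j hj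
      by_cases hij : i < j
      · simp only [if_pos hij]; exact hlog e he i hi j hj hij
      · simp only [if_neg hij]; exact hasDerivAt_const _ _
    have hcomb := (hT1.const_mul (-C)).add hT2
    have hfun : (fun t : ℝ =>
        Lfun C E A ρ u (Function.update w k (Function.update (w k) q t)))
        = (fun t : ℝ =>
          -C * (∑ i : Fin N, ∑ j : Fin N, if i < j then ∑ k', ∑ q',
            u i k' * (if k' = k ∧ q' = q then t else w k' q') * u j q' else 0)
          + ∑ e ∈ E, (A e : ℝ) * ∑ i ∈ e, ∑ j ∈ e,
            if i < j then ∑ k', ∑ q', ρ e i j k' q' *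
              Real.log (u i k' * u j q' * (if k' = k ∧ q' = q then t else w k' q')
                / ρ e i j k' q') else 0) := by
      funext t
      simp only [Lfun, bilin, hupd]
    rw [hfun]
    refine hcomb.congr_deriv (Eq.symm ?_)
    congr 1
    rw [Finset.mul_sum]
    refine Finset.sum_congr rfl fun e _ => ?_
    rw [rhoKQ]
    simp [Finset.mul_sum, mul_comm, mul_left_comm, mul_assoc, div_eq_mul_inv]
  refine ⟨hmain, fun hCS => ?_⟩
  have hwne : w k q ≠ 0 := ht0.ne'
  constructor
  · intro h
    rw [eq_div_iff hCS]
    field_simp at h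
    linarith
  · intro h
    rw [eq_div_iff hCS] at h
    field_simp
    linarith
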